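/- Let D_F and D_G be the unique ℂ-linear derivations of the polynomial ring ℂ[x, y] determined by D_F(x) = −(1/√2)·y, D_F(y) = (1/√2)·x, and D_G(x) = (i/√2)·y, D_G(y) = (i/√2)·x. Then for all natural numbers ℓ and p with p ≤ 2ℓ: (D_F² + D_G²)(x^p y^{2ℓ−p}) = 2·(p² − 2ℓp − ℓ)·x^p y^{2ℓ−p}, where the scalar 2(p² − 2ℓp − ℓ) is computed in ℤ and cast into ℂ. -/

import Mathlib

open MvPolynomial

lemma Dmon (D : Derivation ℂ (MvPolynomial (Fin 2) ℂ) (MvPolynomial (Fin 2) ℂ)) (c d : ℂ)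
    (hx : D (X 0) = c • X 1) (hy : D (X 1) = d • X 0) (p q : ℕ) :
    D (X 0 ^ p * X 1 ^ q) =
      ((p : ℂ) * c) • (X 0 ^ (p - 1) * X 1 ^ (q + 1)) +
      ((q : ℂ) * d) • (X 0 ^ (p + 1) * X 1 ^ (q - 1)) := by
  simp only [Derivation.leibniz, Derivation.leibniz_pow, hx, hy, smul_smul, smul_eq_mul,
    nsmul_eq_mul, MvPolynomial.smul_eq_C_mul, map_mul, map_natCast]
  ring

lemma key (DF DG : Derivation ℂ (MvPolynomial (Fin 2) ℂ) (MvPolynomial (Fin 2) ℂ))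
    (cF dF cG dG : ℂ)
    (hFx : DF (X 0) = cF • X 1) (hFy : DF (X 1) = dF • X 0)
    (hGx : DG (X 0) = cG • X 1) (hGy : DG (X 1) = dG • X 0)
    (h1 : cF * cF + cG * cG = 0) (h2 : dF * dF + dG * dG = 0)
    (h3 : cF * dF + cG * dG = -1) (p q : ℕ) :
    DF (DF (X 0 ^ p * X 1 ^ q)) + DG (DG (X 0 ^ p * X 1 ^ q)) =
      (-(2 * (p : ℂ) * (q : ℂ) + p + q)) • (X 0 ^ p * X 1 ^ q) := by
  have h1' := congrArg (C (σ := Fin 2)) h1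
  have h2' := congrArg (C (σ := Fin 2)) h2
  have h3' := congrArg (C (σ := Fin 2)) h3
  simp only [map_mul, map_add, map_neg, map_zero, map_one] at h1' h2' h3'
  rw [Dmon DF cF dF hFx hFy, Dmon DG cG dG hGx hGy, map_add, map_add,
    Derivation.map_smul, Derivation.map_smul, Derivation.map_smul, Derivation.map_smul,
    Dmon DF cF dF hFx hFy, Dmon DF cF dF hFx hFy,
    Dmon DG cG dG hGx hGy, Dmon DG cG dG hGx hGy]
  rcases p with _ | p <;> rcases q with _ | q <;>
    simp only [Nat.succ_sub_one, Nat.zero_sub, Nat.cast_zero, Nat.cast_add, Nat.cast_one,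
      pow_zero, zero_mul, zero_smul, smul_zero, zero_add, add_zero, Nat.sub_zero] <;>
    simp only [smul_smul, MvPolynomial.smul_eq_C_mul, map_mul, map_add, map_neg, map_natCast,
      map_one, map_ofNat, map_zero, Nat.cast_zero]
  · ring
  · linear_combination ((q : MvPolynomial (Fin 2) ℂ) + 1) * (X 1 ^ (q + 1)) * h3' +
      ((q : MvPolynomial (Fin 2) ℂ) + 1) * q * (X 0 ^ 2 * X 1 ^ (q - 1)) * h2'
  · linear_combination ((p : MvPolynomial (Fin 2) ℂ) + 1) * (X 0 ^ (p + 1)) * h3' +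
      ((p : MvPolynomial (Fin 2) ℂ) + 1) * p * (X 0 ^ (p - 1) * X 1 ^ 2) * h1'
  · linear_combination
      ((p : MvPolynomial (Fin 2) ℂ) + 1) * p * (X 0 ^ (p - 1) * X 1 ^ (q + 3)) * h1' +
      ((q : MvPolynomial (Fin 2) ℂ) + 1) * q * (X 0 ^ (p + 3) * X 1 ^ (q - 1)) * h2' +
      (((p : MvPolynomial (Fin 2) ℂ) + 1) * (q + 2) + ((q : MvPolynomial (Fin 2) ℂ) + 1) * (p + 2)) *
        (X 0 ^ (p + 1) * X 1 ^ (q + 1)) * h3'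


/-- Let `D_F` and `D_G` be the unique `ℂ`-linear derivations of `ℂ[x, y]` determined by
`D_F(x) = −(1/√2)·y`, `D_F(y) = (1/√2)·x`, `D_G(x) = (i/√2)·y`, `D_G(y) = (i/√2)·x`.
Then for all natural numbers `ℓ` and `p` with `p ≤ 2ℓ`:
`(D_F² + D_G²)(x^p y^{2ℓ−p}) = 2(p² − 2ℓp − ℓ) · x^p y^{2ℓ−p}`,
the scalar being computed in `ℤ` and cast into `ℂ`. -/
theorem derivation_F_sq_add_G_sq_eigenvalue
    (DF DG : Derivation ℂ (MvPolynomial (Fin 2) ℂ) (MvPolynomial (Fin 2) ℂ))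
    (hFx : DF (X 0) = (-(1 / (Real.sqrt 2 : ℂ))) • X 1)
    (hFy : DF (X 1) = (1 / (Real.sqrt 2 : ℂ)) • X 0)
    (hGx : DG (X 0) = (Complex.I / (Real.sqrt 2 : ℂ)) • X 1)
    (hGy : DG (X 1) = (Complex.I / (Real.sqrt 2 : ℂ)) • X 0)
    (ℓ p : ℕ) (hp : p ≤ 2 * ℓ) :
    DF (DF (X 0 ^ p * X 1 ^ (2 * ℓ - p))) + DG (DG (X 0 ^ p * X 1 ^ (2 * ℓ - p))) =
      ((2 * ((p : ℤ) ^ 2 - 2 * (ℓ : ℤ) * (p : ℤ) - (ℓ : ℤ)) : ℤ) : ℂ) •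
        (X 0 ^ p * X 1 ^ (2 * ℓ - p)) := by
  have hs : ((Real.sqrt 2 : ℝ) : ℂ) * ((Real.sqrt 2 : ℝ) : ℂ) = 2 := by
    norm_cast
    exact Real.mul_self_sqrt (by norm_num)
  have hs0 : ((Real.sqrt 2 : ℝ) : ℂ) ≠ 0 := by
    intro h
    rw [h, mul_zero] at hs
    norm_num at hs
  rw [key DF DG (-(1 / (Real.sqrt 2 : ℂ))) (1 / (Real.sqrt 2 : ℂ))
      (Complex.I / (Real.sqrt 2 : ℂ)) (Complex.I / (Real.sqrt 2 : ℂ)) hFx hFy hGx hGy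
      (by field_simp; linear_combination Complex.I_sq)
      (by field_simp; linear_combination Complex.I_sq)
      (by field_simp; linear_combination hs + Complex.I_sq) p (2 * ℓ - p)]
  congr 1
  have : ((2 * ℓ - p : ℕ) : ℂ) = 2 * (ℓ : ℂ) - p := by
    push_cast [Nat.cast_sub hp]
    ring
  rw [this]
  push_cast
  ring
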